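/- Let G be a graph with a maximum matching M. Then for every edge e = (u,v) of M, there do not exist two distinct vertices u', v' outside V(M) with u' adjacent to u and v' adjacent to v. Consequently, every edge of M has an endpoint whose neighborhood outside V(M) contains the neighborhood outside V(M) of the other endpoint. -/

import Mathlib

open SimpleGraph

lemma matching_del {V : Type*} {G : SimpleGraph V} {M : G.Subgraph} (hM : M.IsMatching)
    {u v : V} (huv : M.Adj u v) : (M.deleteVerts {u, v}).IsMatching := by
  intro w hw
  rw [SimpleGraph.Subgraph.deleteVerts_verts, Set.mem_diff] at hw
  obtain ⟨hwv, hwuv⟩ := hw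
  simp only [Set.mem_insert_iff, Set.mem_singleton_iff, not_or] at hwuv
  obtain ⟨x, hx, hxuniq⟩ := hM hwv
  have hxu : x ≠ u := by
    rintro rfl
    exact hwuv.2 (ExistsUnique.unique (hM (M.edge_vert huv)) hx.symm huv)
  have hxv : x ≠ v := by
    rintro rfl
    exact hwuv.1 (ExistsUnique.unique (hM (M.edge_vert huv.symm)) hx.symm huv.symm)
  refine ⟨x, ?_, ?_⟩
  · show (M.deleteVerts {u, v}).Adj w x
    rw [SimpleGraph.Subgraph.deleteVerts_adj]
    refine ⟨hwv, by simp [hwuv.1, hwuv.2], M.edge_vert hx.symm, by simp [hxu, hxv], hx⟩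
  · intro y hy
    have hy : (M.deleteVerts {u, v}).Adj w y := hy
    rw [SimpleGraph.Subgraph.deleteVerts_adj] at hy
    exact hxuniq y hy.2.2.2.2

theorem stmt12 {V : Type*} [Fintype V] (G : SimpleGraph V)
    (M : G.Subgraph) (hM : M.IsMatching)
    (hmax : ∀ M' : G.Subgraph, M'.IsMatching → M'.edgeSet.ncard ≤ M.edgeSet.ncard) :
    -- for e = (u,v) ∈ M there are no two distinct vertices u', v' outside V(M)
    -- with u' adjacent to u and v' adjacent to v
    (∀ u v : V, M.Adj u v → ¬ ∃ u' v' : V, u' ≠ v' ∧ u' ∉ M.support ∧ v' ∉ M.support ∧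
      G.Adj u u' ∧ G.Adj v v') ∧
    -- consequently some endpoint's neighborhood outside V(M) contains the other's
    (∀ u v : V, M.Adj u v →
      {x : V | x ∉ M.support ∧ G.Adj v x} ⊆ {x : V | x ∉ M.support ∧ G.Adj u x} ∨
      {x : V | x ∉ M.support ∧ G.Adj u x} ⊆ {x : V | x ∉ M.support ∧ G.Adj v x}) := by
  have key : ∀ u v : V, M.Adj u v → ¬ ∃ u' v' : V, u' ≠ v' ∧ u' ∉ M.support ∧ v' ∉ M.support ∧
      G.Adj u u' ∧ G.Adj v v' := by
    rintro u v huv ⟨u', v', hne, hu', hv', hGu, hGv⟩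
    rw [hM.support_eq_verts] at hu' hv'
    have hu_mem : u ∈ M.verts := M.edge_vert huv
    have hv_mem : v ∈ M.verts := M.edge_vert huv.symm
    have huvne : u ≠ v := (M.adj_sub huv).ne
    have huu' : u ≠ u' := fun h => hu' (h ▸ hu_mem)
    have hvv' : v ≠ v' := fun h => hv' (h ▸ hv_mem)
    have huv' : u ≠ v' := fun h => hv' (h ▸ hu_mem)
    have hvu' : v ≠ u' := fun h => hu' (h ▸ hv_mem)
    set M₀ := M.deleteVerts {u, v} with hM₀
    set M₁ := G.subgraphOfAdj hGu with hM₁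
    set M₂ := G.subgraphOfAdj hGv with hM₂
    have hm0 : M₀.IsMatching := matching_del hM huv
    have hm12 : (M₁ ⊔ M₂).IsMatching := by
      refine (SimpleGraph.Subgraph.IsMatching.subgraphOfAdj hGu).sup
        (SimpleGraph.Subgraph.IsMatching.subgraphOfAdj hGv) ?_
      rw [SimpleGraph.support_subgraphOfAdj, SimpleGraph.support_subgraphOfAdj]
      rw [Set.disjoint_iff_forall_ne]
      rintro a ha b hb rfl
      simp only [Set.mem_insert_iff, Set.mem_singleton_iff] at ha hb
      rcases ha with rfl | rfl <;> rcases hb with rfl | rfl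
      · exact huvne rfl
      · exact huv' rfl
      · exact hvu' rfl
      · exact hne rfl
    have hall : (M₀ ⊔ (M₁ ⊔ M₂)).IsMatching := by
      refine hm0.sup hm12 ?_
      rw [Set.disjoint_iff_forall_ne]
      rintro a ha b hb rfl
      have haV : a ∈ M₀.verts := M₀.support_subset_verts ha
      rw [hM₀, SimpleGraph.Subgraph.deleteVerts_verts, Set.mem_diff] at haV
      obtain ⟨haM, hauv⟩ := haV
      simp only [Set.mem_insert_iff, Set.mem_singleton_iff, not_or] at hauv
      obtain ⟨c, hc⟩ := hb
      have hc : (M₁ ⊔ M₂).Adj a c := hc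
      rw [SimpleGraph.Subgraph.sup_adj] at hc
      rcases hc with hc | hc
      · have hbm : a ∈ M₁.support := ⟨c, hc⟩
        rw [hM₁, SimpleGraph.support_subgraphOfAdj] at hbm
        simp only [Set.mem_insert_iff, Set.mem_singleton_iff] at hbm
        rcases hbm with rfl | rfl
        · exact hauv.1 rfl
        · exact hu' haM
      · have hbm : a ∈ M₂.support := ⟨c, hc⟩
        rw [hM₂, SimpleGraph.support_subgraphOfAdj] at hbm
        simp only [Set.mem_insert_iff, Set.mem_singleton_iff] at hbm
        rcases hbm with rfl | rfl
        · exact hauv.2 rfl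
        · exact hv' haM
    -- edge set of M₀
    have hE0 : M₀.edgeSet = M.edgeSet \ {s(u, v)} := by
      ext e
      refine Sym2.ind (fun a b => ?_) e
      rw [SimpleGraph.Subgraph.mem_edgeSet, Set.mem_diff, Set.mem_singleton_iff,
        SimpleGraph.Subgraph.mem_edgeSet]
      show (M.deleteVerts {u, v}).Adj a b ↔ _
      rw [SimpleGraph.Subgraph.deleteVerts_adj]
      constructor
      · rintro ⟨-, hauv, -, hbuv, hab⟩
        simp only [Set.mem_insert_iff, Set.mem_singleton_iff, not_or] at hauv hbuv
        refine ⟨hab, fun h => ?_⟩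
        rcases Sym2.eq_iff.mp h with ⟨rfl, rfl⟩ | ⟨rfl, rfl⟩
        · exact hauv.1 rfl
        · exact hauv.2 rfl
      · rintro ⟨hab, hne'⟩
        have hau : a ≠ u := by
          rintro rfl
          exact hne' (by rw [ExistsUnique.unique (hM hu_mem) hab huv])
        have hav : a ≠ v := by
          rintro rfl
          exact hne' (by rw [ExistsUnique.unique (hM hv_mem) hab huv.symm, Sym2.eq_swap])
        have hbu : b ≠ u := by
          rintro rfl
          exact hne' (by rw [ExistsUnique.unique (hM hu_mem) hab.symm huv, Sym2.eq_swap])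
        have hbv : b ≠ v := by
          rintro rfl
          exact hne' (by rw [ExistsUnique.unique (hM hv_mem) hab.symm huv.symm])
        exact ⟨M.edge_vert hab, by simp [hau, hav], M.edge_vert hab.symm,
          by simp [hbu, hbv], hab⟩
    have hE : (M₀ ⊔ (M₁ ⊔ M₂)).edgeSet =
        (M.edgeSet \ {s(u, v)}) ∪ {s(u, u'), s(v, v')} := by
      rw [SimpleGraph.Subgraph.edgeSet_sup, SimpleGraph.Subgraph.edgeSet_sup, hE0,
        hM₁, hM₂, SimpleGraph.edgeSet_subgraphOfAdj,
        SimpleGraph.edgeSet_subgraphOfAdj, Set.singleton_union]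
    -- counting
    have he1 : s(u, u') ∉ M.edgeSet := by
      rw [SimpleGraph.Subgraph.mem_edgeSet]
      intro h
      exact hu' (M.edge_vert h.symm)
    have he2 : s(v, v') ∉ M.edgeSet := by
      rw [SimpleGraph.Subgraph.mem_edgeSet]
      intro h
      exact hv' (M.edge_vert h.symm)
    have he12 : s(u, u') ≠ s(v, v') := by
      intro h
      rcases Sym2.eq_iff.mp h with ⟨rfl, -⟩ | ⟨rfl, -⟩
      · exact huvne rfl
      · exact huv' rfl
    have hdisj : Disjoint (M.edgeSet \ {s(u, v)}) {s(u, u'), s(v, v')} := by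
      rw [Set.disjoint_iff_forall_ne]
      rintro a ha b hb rfl
      simp only [Set.mem_insert_iff, Set.mem_singleton_iff] at hb
      rcases hb with rfl | rfl
      · exact he1 ha.1
      · exact he2 ha.1
    have hfin : (M.edgeSet \ {s(u, v)}).Finite := Set.toFinite _
    have hcard : ((M.edgeSet \ {s(u, v)}) ∪ {s(u, u'), s(v, v')}).ncard =
        (M.edgeSet \ {s(u, v)}).ncard + 2 := by
      rw [Set.ncard_union_eq hdisj hfin (Set.toFinite _), Set.ncard_pair he12]
    have hsub : (M.edgeSet \ {s(u, v)}).ncard + 1 = M.edgeSet.ncard :=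
      Set.ncard_diff_singleton_add_one (by rwa [SimpleGraph.Subgraph.mem_edgeSet])
        (Set.toFinite _)
    have := hmax _ hall
    rw [hE, hcard] at this
    omega
  refine ⟨key, ?_⟩
  intro u v huv
  by_contra h
  push_neg at h
  obtain ⟨h1, h2⟩ := h
  rw [Set.not_subset] at h1 h2
  obtain ⟨v', hv'1, hv'2⟩ := h1
  obtain ⟨u', hu'1, hu'2⟩ := h2
  simp only [Set.mem_setOf_eq, not_and] at hv'1 hv'2 hu'1 hu'2
  refine key u v huv ⟨u', v', ?_, hu'1.1, hv'1.1, hu'1.2, hv'1.2⟩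
  rintro rfl
  exact hv'2 hv'1.1 hu'1.2
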